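/- If a is a weak composition such that there exists an index i with a_i > a_{i+1} = 0, then the key polynomial κ_a is not quasisymmetric in x_1,...,x_n. -/
import Mathlib


open scoped Classical

/-- A Kohnert move: take the rightmost cell of row `r` and move it down in its
column to the highest open row `r'` below (rows indexed from 1). Cells are `(row, column)`. -/
def KohnertMove (D D' : Finset (ℕ × ℕ)) : Prop :=
  ∃ r c r', (r, c) ∈ D ∧ (∀ c', (r, c') ∈ D → c' ≤ c) ∧
    1 ≤ r' ∧ r' < r ∧ (r', c) ∉ D ∧ (∀ r'', r' < r'' → r'' < r → (r'', c) ∈ D) ∧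
    D' = insert (r', c) (D.erase (r, c))

/-- The largest part of a weak composition. -/
def maxPart (a : List ℕ) : ℕ := a.foldr max 0

/-- Number of cells of a diagram in row `i`. -/
def rowWeight (D : Finset (ℕ × ℕ)) (i : ℕ) : ℕ :=
  (D.filter (fun p => p.1 = i)).card

/-- The weight of a diagram, as a finitely supported function recording the
number of cells in each row. -/
noncomputable def wtF (D : Finset (ℕ × ℕ)) : ℕ →₀ ℕ := ∑ p ∈ D, Finsupp.single p.1 1

/-- The exponent vector `x^a` of a weak composition `a` (1-based variables). -/
noncomputable def compFinsupp (a : List ℕ) : ℕ →₀ ℕ :=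
  ∑ i ∈ Finset.range a.length, Finsupp.single (i + 1) (a.getD i 0)

/-- The key (left-justified) diagram of a weak composition `a`. -/
def keyDiagram (a : List ℕ) : Finset (ℕ × ℕ) :=
  (Finset.Icc 1 a.length ×ˢ Finset.Icc 1 (maxPart a)).filter
    (fun p => p.2 ≤ a.getD (p.1 - 1) 0)

/-- The set of key Kohnert diagrams of `a`: all diagrams obtainable from the key
diagram of `a` by sequences of Kohnert moves. -/
noncomputable def KDset (a : List ℕ) : Finset (Finset (ℕ × ℕ)) :=
  ((Finset.Icc 1 a.length ×ˢ Finset.Icc 1 (maxPart a)).powerset).filter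
    (fun D => Relation.ReflTransGen KohnertMove (keyDiagram a) D)

/-- The key polynomial `κ_a = Σ_{D ∈ KD(a)} x^{wt(D)}`. -/
noncomputable def keyPoly (a : List ℕ) : MvPolynomial ℕ ℤ :=
  ∑ D ∈ KDset a, MvPolynomial.monomial (wtF D) (1 : ℤ)

/-- The ordered sequence of nonzero exponents of a monomial in `x_1, …, x_n`. -/
def nzSeq (n : ℕ) (μ : ℕ →₀ ℕ) : List ℕ :=
  ((List.range n).map (fun i => μ (i + 1))).filter (fun x => x ≠ 0)

/-- A polynomial is quasisymmetric in `x_1, …, x_n` if the coefficients of any two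
monomials (in those variables) agree whenever their ordered sequences of nonzero
exponents agree. -/
def IsQuasisymmetricIn (n : ℕ) (f : MvPolynomial ℕ ℤ) : Prop :=
  ∀ μ ν : ℕ →₀ ℕ, (∀ i ∈ μ.support, i ∈ Finset.Icc 1 n) →
    (∀ i ∈ ν.support, i ∈ Finset.Icc 1 n) →
    nzSeq n μ = nzSeq n ν → MvPolynomial.coeff μ f = MvPolynomial.coeff ν f

lemma getD_le_maxPart (a : List ℕ) {j : ℕ} (h : j < a.length) : a.getD j 0 ≤ maxPart a := by
  induction a generalizing j with
  | nil => simp at h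
  | cons x xs ih =>
    cases j with
    | zero => exact le_max_left _ _
    | succ j =>
      simp only [List.getD_cons_succ]
      exact (ih (by simpa using h)).trans (le_max_right _ _)

lemma wtF_apply (D : Finset (ℕ × ℕ)) (j : ℕ) :
    wtF D j = (D.filter (fun p => p.1 = j)).card := by
  rw [wtF, Finsupp.finset_sum_apply, Finset.card_filter]
  exact Finset.sum_congr rfl fun p _ => Finsupp.single_apply

noncomputable def psum (f : ℕ →₀ ℕ) (k : ℕ) : ℕ := ∑ j ∈ Finset.range (k+1), f j

lemma psum_wtF (D : Finset (ℕ × ℕ)) (k : ℕ) :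
    psum (wtF D) k = (D.filter (fun p => p.1 ≤ k)).card := by
  rw [psum, Finset.card_filter]
  calc ∑ j ∈ Finset.range (k+1), wtF D j
      = ∑ j ∈ Finset.range (k+1), ∑ p ∈ D, ((Finsupp.single p.1 1 : ℕ →₀ ℕ) j) := by
        simp [wtF, Finsupp.finset_sum_apply]
    _ = ∑ p ∈ D, ∑ j ∈ Finset.range (k+1), (if p.1 = j then 1 else 0) := by
        rw [Finset.sum_comm]
        simp [Finsupp.single_apply]
    _ = ∑ p ∈ D, (if p.1 ≤ k then 1 else 0) := by
        refine Finset.sum_congr rfl fun p _ => ?_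
        rw [Finset.sum_ite_eq]
        simp [Nat.lt_succ_iff]

lemma card_le_of_move {D D' : Finset (ℕ × ℕ)} (h : KohnertMove D D') (k : ℕ) :
    (D.filter (fun p => p.1 ≤ k)).card ≤ (D'.filter (fun p => p.1 ≤ k)).card := by
  obtain ⟨r, c, r', hmem, -, -, hr'r, hnot, -, hD'⟩ := h
  subst hD'
  rw [Finset.filter_insert, Finset.filter_erase]
  by_cases hrk : r ≤ k
  · have hr'k : r' ≤ k := le_of_lt (lt_of_lt_of_le hr'r hrk)
    rw [if_pos hr'k]
    have hm : (r, c) ∈ D.filter (fun p => p.1 ≤ k) := Finset.mem_filter.mpr ⟨hmem, hrk⟩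
    rw [Finset.card_insert_of_notMem, Finset.card_erase_of_mem hm]
    · have := Finset.card_pos.mpr ⟨_, hm⟩
      omega
    · intro hc
      exact hnot (Finset.mem_filter.mp (Finset.mem_erase.mp hc).2).1
  · have hnm : (r, c) ∉ D.filter (fun p => p.1 ≤ k) := fun hc => hrk (Finset.mem_filter.mp hc).2
    rw [Finset.erase_eq_of_notMem hnm]
    split
    · exact Finset.card_le_card (Finset.subset_insert _ _)
    · exact le_refl _

lemma card_le_of_rtg {D D' : Finset (ℕ × ℕ)} (h : Relation.ReflTransGen KohnertMove D D') (k : ℕ) :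
    (D.filter (fun p => p.1 ≤ k)).card ≤ (D'.filter (fun p => p.1 ≤ k)).card := by
  induction h with
  | refl => exact le_refl _
  | tail _ hstep ih => exact ih.trans (card_le_of_move hstep k)

lemma row_mem_of_wtF_ne (D : Finset (ℕ × ℕ)) (j : ℕ) (h : wtF D j ≠ 0) :
    ∃ p ∈ D, p.1 = j := by
  rw [wtF_apply] at h
  obtain ⟨p, hp⟩ := Finset.card_ne_zero.mp h
  exact ⟨p, (Finset.mem_filter.mp hp).1, (Finset.mem_filter.mp hp).2⟩

/-- If there is an index `i` (1-based) with `a_i > a_{i+1} = 0`, then the key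
polynomial `κ_a` is not quasisymmetric in `x_1, …, x_n`. -/
theorem key_not_quasisymmetric_of_zero_after_nonzero (a : List ℕ) (i : ℕ)
    (h1 : 1 ≤ i) (h2 : i < a.length)
    (h3 : 0 < a.getD (i - 1) 0) (h4 : a.getD i 0 = 0) :
    ¬ IsQuasisymmetricIn a.length (keyPoly a) := by
  intro hq
  set n := a.length with hn
  set μ := wtF (keyDiagram a) with hμ
  -- basic facts about μ
  have hmax : 0 < maxPart a := lt_of_lt_of_le h3 (getD_le_maxPart a (by omega))
  have hmemcell : (i, 1) ∈ keyDiagram a := by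
    simp only [keyDiagram, Finset.mem_filter, Finset.mem_product, Finset.mem_Icc]
    exact ⟨⟨⟨h1, le_of_lt h2⟩, ⟨le_refl 1, hmax⟩⟩, h3⟩
  have hμi : μ i ≠ 0 := by
    rw [hμ, wtF_apply]
    exact Finset.card_ne_zero.mpr ⟨_, Finset.mem_filter.mpr ⟨hmemcell, rfl⟩⟩
  have hμi1 : μ (i + 1) = 0 := by
    rw [hμ, wtF_apply, Finset.card_eq_zero, Finset.filter_eq_empty_iff]
    intro p hp hpi
    simp only [keyDiagram, Finset.mem_filter, Finset.mem_product, Finset.mem_Icc] at hp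
    rw [hpi, Nat.add_sub_cancel, h4] at hp
    omega
  -- the swapped exponent vector ν
  set ν : ℕ →₀ ℕ := (μ.update (i + 1) (μ i)).update i 0 with hνdef
  have hνval : ∀ j, ν j = if j = i then 0 else if j = i + 1 then μ i else μ j := by
    intro j
    rw [hνdef]
    simp [Finsupp.coe_update, Function.update_apply]
  have hνi : ν i = 0 := by rw [hνval]; simp
  have hνi1 : ν (i + 1) = μ i := by
    rw [hνval, if_neg (by omega), if_pos rfl]
  -- support conditions
  have hμsupp : ∀ j ∈ μ.support, j ∈ Finset.Icc 1 n := by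
    intro j hj
    obtain ⟨p, hpD, hpj⟩ := row_mem_of_wtF_ne _ _ (Finsupp.mem_support_iff.mp hj)
    simp only [keyDiagram, Finset.mem_filter, Finset.mem_product] at hpD
    rw [← hpj]
    exact hpD.1.1
  have hνsupp : ∀ j ∈ ν.support, j ∈ Finset.Icc 1 n := by
    intro j hj
    have hne := Finsupp.mem_support_iff.mp hj
    rw [hνval] at hne
    by_cases hji : j = i
    · rw [if_pos hji] at hne; exact absurd rfl hne
    · by_cases hji1 : j = i + 1
      · subst hji1
        exact Finset.mem_Icc.mpr ⟨by omega, by omega⟩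
      · rw [if_neg hji, if_neg hji1] at hne
        exact hμsupp j (Finsupp.mem_support_iff.mpr hne)
  -- equality of nonzero sequences
  have hnz : nzSeq n μ = nzSeq n ν := by
    have hsplit : List.range n
        = (List.range (i - 1) ++ [i - 1, i])
          ++ (List.range (n - (i + 1))).map (fun x => (i + 1) + x) := by
      have h' : n = (i + 1) + (n - (i + 1)) := by omega
      conv_lhs => rw [h', List.range_add]
      congr 1
      have h'' : i + 1 = (i - 1) + 2 := by omega
      rw [h'', List.range_add]
      congr 1
      have : List.range 2 = [0, 1] := by decide
      rw [this]
      have e1 : i - 1 + 1 = i := by omega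
      simp [e1]
    have hkey : ∀ x, x ≠ i - 1 → x ≠ i → ν (x + 1) = μ (x + 1) := by
      intro x hx1 hx2
      rw [hνval, if_neg (by omega), if_neg (by omega)]
    rw [nzSeq, nzSeq]
    conv_lhs => rw [hsplit]
    conv_rhs => rw [hsplit]
    simp only [List.map_append, List.filter_append, List.map_map, List.map_cons, List.map_nil]
    congr 1
    · congr 1
      · congr 1
        refine List.map_congr_left fun x hx => ?_
        have hx' := List.mem_range.mp hx
        exact (hkey x (by omega) (by omega)).symm
      · have e : i - 1 + 1 = i := by omega
        rw [e]
        rw [hνi, hνi1, hμi1]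
        simp [List.filter_cons, hμi]
    · congr 1
      refine List.map_congr_left fun x hx => ?_
      have : (fun i => ν (i + 1)) ∘ (fun x => i + 1 + x) = fun x => ν (i + 1 + x + 1) := rfl
      simp only [Function.comp_apply]
      exact (hkey (i + 1 + x) (by omega) (by omega)).symm
  -- coefficient of μ is nonzero
  have hkmem : keyDiagram a ∈ KDset a := by
    rw [KDset]
    exact Finset.mem_filter.mpr
      ⟨Finset.mem_powerset.mpr (Finset.filter_subset _ _), Relation.ReflTransGen.refl⟩
  have hcoeffμ : MvPolynomial.coeff μ (keyPoly a) ≠ 0 := by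
    rw [keyPoly, MvPolynomial.coeff_sum]
    simp only [MvPolynomial.coeff_monomial]
    rw [Finset.sum_boole]
    have hcard : ((KDset a).filter (fun D => wtF D = μ)).card ≠ 0 :=
      Finset.card_ne_zero.mpr ⟨_, Finset.mem_filter.mpr ⟨hkmem, hμ.symm⟩⟩
    exact_mod_cast Int.natCast_ne_zero.mpr hcard
  -- coefficient of ν is zero
  have hψ : psum ν i + μ i = psum μ i := by
    rw [psum, psum, Finset.sum_range_succ, Finset.sum_range_succ, hνi]
    have hcg : ∑ j ∈ Finset.range i, ν j = ∑ j ∈ Finset.range i, μ j := by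
      refine Finset.sum_congr rfl fun j hj => ?_
      have := Finset.mem_range.mp hj
      rw [hνval, if_neg (by omega), if_neg (by omega)]
    rw [hcg]
    omega
  have hcoeffν : MvPolynomial.coeff ν (keyPoly a) = 0 := by
    rw [keyPoly, MvPolynomial.coeff_sum]
    refine Finset.sum_eq_zero fun D hD => ?_
    rw [MvPolynomial.coeff_monomial, if_neg]
    intro hwt
    have hrtg : Relation.ReflTransGen KohnertMove (keyDiagram a) D := by
      rw [KDset] at hD
      exact (Finset.mem_filter.mp hD).2
    have hle := card_le_of_rtg hrtg i
    rw [← psum_wtF, ← psum_wtF, hwt, ← hμ] at hle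
    have hμine : μ i ≠ 0 := hμi
    omega
  -- contradiction
  have := hq μ ν hμsupp hνsupp hnz
  rw [hcoeffν] at this
  exact hcoeffμ this
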